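/- ∫_0^1 x²·ψ'(x) dx = log(2π) − γ, where ψ' is the trigamma function and γ is the Euler–Mascheroni constant. -/

import Mathlib

/-- The digamma function `ψ = Γ'/Γ`, as the derivative of `log Γ`. -/
noncomputable def digamma (x : ℝ) : ℝ := deriv (fun y => Real.log (Real.Gamma y)) x

namespace IntegralSqTrigammaAux

open Real Filter Topology Set MeasureTheory intervalIntegral


noncomputable def psi2 (x : ℝ) : ℝ := ∑' n : ℕ, ((x + n) ^ 2)⁻¹

noncomputable def dgAux (x : ℝ) : ℝ :=
  (-Real.eulerMascheroniConstant + ∑' m : ℕ, (((m : ℝ) + 1)⁻¹ - (x + ((m : ℝ) + 1))⁻¹)) + -x⁻¹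

/-- partial digamma -/
noncomputable def P (n : ℕ) (y : ℝ) : ℝ :=
  Real.log n - ∑ m ∈ Finset.range (n + 1), (y + m)⁻¹

noncomputable def Q (n : ℕ) (y : ℝ) : ℝ :=
  ∑ m ∈ Finset.range (n + 1), ((y + m) ^ 2)⁻¹

lemma hasDerivAt_P (n : ℕ) {y : ℝ} (hy : 0 < y) :
    HasDerivAt (fun y => Real.BohrMollerup.logGammaSeq y n) (P n y) y := by
  have h1 : HasDerivAt (fun y : ℝ => y * Real.log n + Real.log (Nat.factorial n : ℝ)) (Real.log n) y := by
    simpa using ((hasDerivAt_id y).mul_const (Real.log n)).add_const (Real.log (Nat.factorial n : ℝ))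
  have h2 : HasDerivAt (fun y : ℝ => ∑ m ∈ Finset.range (n + 1), Real.log (y + m))
      (∑ m ∈ Finset.range (n + 1), (y + m)⁻¹) y := by
    apply HasDerivAt.fun_sum
    intro m _
    have hym : 0 < y + (m : ℝ) := by positivity
    simpa [one_div] using (((hasDerivAt_id y).add_const (m : ℝ)).log hym.ne')
  simpa [Real.BohrMollerup.logGammaSeq, P] using h1.fun_sub h2

lemma hasDerivAt_Pn (n : ℕ) {y : ℝ} (hy : 0 < y) :
    HasDerivAt (P n) (Q n y) y := by
  have h2 : HasDerivAt (fun y : ℝ => ∑ m ∈ Finset.range (n + 1), (y + m)⁻¹)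
      (∑ m ∈ Finset.range (n + 1), -((y + m) ^ 2)⁻¹) y := by
    apply HasDerivAt.fun_sum
    intro m _
    have hym : 0 < y + (m : ℝ) := by positivity
    simpa [neg_div, one_div] using (((hasDerivAt_id y).add_const (m : ℝ)).fun_inv hym.ne')
  have := (hasDerivAt_const y (Real.log n)).fun_sub h2
  rw [show P n = fun y : ℝ => Real.log n - ∑ m ∈ Finset.range (n + 1), (y + (m : ℝ))⁻¹ from rfl]
  simpa [P, Q] using this

lemma summable_sq_inv_shift {a : ℝ} (ha : 0 < a) :
    Summable (fun m : ℕ => ((a + m) ^ 2)⁻¹) := by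
  set c : ℝ := min a 1 with hc
  have hc0 : 0 < c := lt_min ha one_pos
  have hbase : Summable (fun m : ℕ => (((1 : ℝ) + m) ^ 2)⁻¹) := by
    have : Summable (fun m : ℕ => ((m : ℝ) ^ 2)⁻¹) := by
      simpa [one_div] using Real.summable_one_div_nat_pow.mpr (by norm_num : 2 ≤ 2)
    have := (summable_nat_add_iff 1).mpr this
    refine this.congr fun m => ?_
    push_cast; ring_nf
  refine Summable.of_nonneg_of_le (fun m => by positivity)
    (fun m => ?_) (hbase.mul_left (c ^ 2)⁻¹)
  have h1 : c * (1 + m) ≤ a + m := by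
    have h2 : c ≤ a := min_le_left _ _
    have h3 : c ≤ 1 := min_le_right _ _
    nlinarith [Nat.cast_nonneg (α := ℝ) m]
  have h5 : (c * (1 + (m:ℝ))) ^ 2 ≤ (a + m) ^ 2 := by
    have h6 : (0:ℝ) ≤ c * (1 + (m:ℝ)) := by positivity
    exact pow_le_pow_left₀ h6 h1 2
  calc ((a + (m:ℝ)) ^ 2)⁻¹ ≤ ((c * (1 + (m:ℝ))) ^ 2)⁻¹ := by
        apply inv_anti₀ (by positivity) h5
    _ = (c ^ 2)⁻¹ * (((1:ℝ) + (m:ℝ)) ^ 2)⁻¹ := by rw [mul_pow, mul_inv]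

lemma unifQ {a b : ℝ} (ha : 0 < a) :
    TendstoUniformlyOn Q psi2 atTop (Ioo a b) := by
  have h := tendstoUniformlyOn_tsum_nat (summable_sq_inv_shift ha)
    (f := fun (m : ℕ) (y : ℝ) => ((y + m) ^ 2)⁻¹) (s := Ioo a b) ?_
  · intro u hu
    exact (tendsto_add_atTop_nat 1).eventually (h u hu)
  · intro m y hy
    rw [Real.norm_eq_abs, abs_of_nonneg (by positivity)]
    apply inv_anti₀ (by positivity)
    have : a ≤ y := hy.1.le
    gcongr

lemma summable_dg {x : ℝ} (hx : 0 < x) :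
    Summable (fun m : ℕ => (((m : ℝ) + 1)⁻¹ - (x + ((m : ℝ) + 1))⁻¹)) := by
  have hb : Summable (fun m : ℕ => x * (((1 : ℝ) + m) ^ 2)⁻¹) := by
    apply Summable.mul_left
    have : Summable (fun m : ℕ => ((m : ℝ) ^ 2)⁻¹) := by
      simpa [one_div] using Real.summable_one_div_nat_pow.mpr (by norm_num : 2 ≤ 2)
    have := (summable_nat_add_iff 1).mpr this
    refine this.congr fun m => ?_
    push_cast; ring_nf
  refine Summable.of_nonneg_of_le (fun m => ?_) (fun m => ?_) hb
  · have h1 : (0:ℝ) < (m : ℝ) + 1 := by positivity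
    have h2 : (m : ℝ) + 1 ≤ x + ((m : ℝ) + 1) := by linarith
    have := inv_anti₀ h1 h2
    linarith
  · have h1 : (0:ℝ) < (m : ℝ) + 1 := by positivity
    have h2 : (0:ℝ) < x + ((m : ℝ) + 1) := by positivity
    rw [inv_sub_inv h1.ne' h2.ne']
    rw [div_le_iff₀ (by positivity)]
    have : ((1:ℝ) + m) ^ 2 ≤ ((m:ℝ) + 1) * (x + ((m:ℝ) + 1)) := by nlinarith
    calc x + ((m:ℝ)+1) - ((m:ℝ)+1) = x := by ring
      _ = x * ((((1:ℝ)+m) ^ 2)⁻¹ * ((1+m)^2)) := by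
          rw [inv_mul_cancel₀ (by positivity)]; ring
      _ ≤ x * ((((1:ℝ)+m) ^ 2)⁻¹ * (((m:ℝ) + 1) * (x + ((m:ℝ) + 1)))) := by
          gcongr
      _ = x * (((1:ℝ)+m) ^ 2)⁻¹ * (((m:ℝ) + 1) * (x + ((m:ℝ) + 1))) := by ring

lemma unifP {a b : ℝ} (ha : 0 < a) (hb : a < b) :
    TendstoUniformlyOn P dgAux atTop (Ioo a b) := by
  -- decompose P n y = (log n - harmonic n) + partial sums + (-y⁻¹)
  have key : ∀ n : ℕ, ∀ y ∈ Ioo a b, P n y =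
      ((Real.log n - (harmonic n : ℝ)) +
        ∑ m ∈ Finset.range n, (((m : ℝ) + 1)⁻¹ - (y + ((m : ℝ) + 1))⁻¹)) + -y⁻¹ := by
    intro n y _
    rw [P, Finset.sum_range_succ' (fun m => (y + (m:ℝ))⁻¹) n]
    rw [harmonic, Finset.sum_sub_distrib]
    push_cast
    ring
  have h1 : TendstoUniformlyOn
      (fun (n : ℕ) (y : ℝ) => ((Real.log n - (harmonic n : ℝ)) +
        ∑ m ∈ Finset.range n, (((m : ℝ) + 1)⁻¹ - (y + ((m : ℝ) + 1))⁻¹)) + -y⁻¹)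
      dgAux atTop (Ioo a b) := by
    apply TendstoUniformlyOn.add
    · apply TendstoUniformlyOn.add
      · have : Tendsto (fun n : ℕ => Real.log n - (harmonic n : ℝ)) atTop
            (𝓝 (-Real.eulerMascheroniConstant)) := by
          have := Real.tendsto_harmonic_sub_log
          simpa using this.neg.congr (fun n => by ring)
        exact this.tendstoUniformlyOn_const _
      · apply tendstoUniformlyOn_tsum_nat
          (u := fun m => b * (((1:ℝ) + m) ^ 2)⁻¹)
        · have : Summable (fun m : ℕ => ((m : ℝ) ^ 2)⁻¹) := by
            simpa [one_div] using Real.summable_one_div_nat_pow.mpr (by norm_num : 2 ≤ 2)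
          have := (summable_nat_add_iff 1).mpr this
          exact (this.congr fun m => by push_cast; ring_nf).mul_left _
        · intro m y hy
          have hy0 : 0 < y := ha.trans hy.1
          have h1 : (0:ℝ) < (m : ℝ) + 1 := by positivity
          have h2 : (0:ℝ) < y + ((m : ℝ) + 1) := by positivity
          rw [Real.norm_eq_abs, abs_of_nonneg ?pos]
          case pos =>
            have h3 : (m : ℝ) + 1 ≤ y + ((m : ℝ) + 1) := by linarith
            have := inv_anti₀ h1 h3
            linarith
          rw [inv_sub_inv h1.ne' h2.ne', div_le_iff₀ (by positivity)]
          have hyb : y ≤ b := hy.2.le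
          have : ((1:ℝ) + m) ^ 2 ≤ ((m:ℝ) + 1) * (y + ((m:ℝ) + 1)) := by nlinarith
          calc y + ((m:ℝ)+1) - ((m:ℝ)+1) = y := by ring
            _ ≤ b := hyb
            _ = b * ((((1:ℝ)+m) ^ 2)⁻¹ * ((1+m)^2)) := by
                rw [inv_mul_cancel₀ (by positivity)]; ring
            _ ≤ b * ((((1:ℝ)+m) ^ 2)⁻¹ * (((m:ℝ) + 1) * (y + ((m:ℝ) + 1)))) := by
                have hb0 : (0:ℝ) < b := ha.trans hb
                gcongr
            _ = b * (((1:ℝ)+m) ^ 2)⁻¹ * (((m:ℝ) + 1) * (y + ((m:ℝ) + 1))) := by ring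
    · intro u hu
      filter_upwards with n y hy
      simpa using refl_mem_uniformity hu
  exact h1.congr (by filter_upwards with n y hy using (key n y hy).symm)

lemma hasDerivAt_logGamma {x : ℝ} (hx : 0 < x) :
    HasDerivAt (fun y => Real.log (Real.Gamma y)) (dgAux x) x := by
  have hs : IsOpen (Ioo (x/2) (x+1)) := isOpen_Ioo
  have hmem : x ∈ Ioo (x/2) (x+1) := ⟨by linarith, by linarith⟩
  refine hasDerivAt_of_tendstoUniformlyOn (f := fun n y => Real.BohrMollerup.logGammaSeq y n)
    hs (unifP (by linarith) (by linarith)) ?_ ?_ hmem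
  · filter_upwards with n y hy
    exact hasDerivAt_P n (lt_trans (by linarith) hy.1)
  · intro y hy
    exact Real.BohrMollerup.tendsto_log_gamma (lt_trans (by linarith) hy.1)

lemma hasDerivAt_dgAux {x : ℝ} (hx : 0 < x) :
    HasDerivAt dgAux (psi2 x) x := by
  have hs : IsOpen (Ioo (x/2) (x+1)) := isOpen_Ioo
  have hmem : x ∈ Ioo (x/2) (x+1) := ⟨by linarith, by linarith⟩
  refine hasDerivAt_of_tendstoUniformlyOn (f := P) hs (unifQ (by linarith)) ?_ ?_ hmem
  · filter_upwards with n y hy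
    exact hasDerivAt_Pn n (lt_trans (by linarith) hy.1)
  · intro y hy
    exact (unifP (by linarith) (by linarith)).tendsto_at hy

lemma deriv_digamma_eq {x : ℝ} (hx : 0 < x) : deriv digamma x = psi2 x := by
  have heq : Set.EqOn digamma dgAux (Ioi 0) := fun y hy =>
    (hasDerivAt_logGamma (mem_Ioi.mp hy)).deriv
  rw [Filter.EventuallyEq.deriv_eq (heq.eventuallyEq_of_mem (Ioi_mem_nhds hx))]
  exact (hasDerivAt_dgAux hx).deriv

/-- term functions -/
noncomputable def Fn (n : ℕ) (x : ℝ) : ℝ := x ^ 2 * ((x + n) ^ 2)⁻¹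

lemma Fn_bound {n : ℕ} {x : ℝ} (hx : x ∈ Ioc (0:ℝ) 1) :
    ‖Fn n x‖ ≤ (((n:ℝ) + 1) ^ 2)⁻¹ := by
  obtain ⟨hx0, hx1⟩ := hx
  have hxn : (0:ℝ) < x + n := by positivity
  rw [Fn, Real.norm_eq_abs, abs_of_nonneg (by positivity)]
  have h1 : x * ((n:ℝ) + 1) ≤ x + n := by nlinarith [Nat.cast_nonneg (α := ℝ) n]
  have h2 : (x * ((n:ℝ) + 1)) ^ 2 ≤ (x + n) ^ 2 := pow_le_pow_left₀ (by positivity) h1 2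
  rw [← div_eq_mul_inv, div_le_iff₀ (by positivity), ← div_eq_inv_mul,
    le_div_iff₀ (by positivity)]
  nlinarith [h2]

lemma Fn_meas (n : ℕ) : Measurable (Fn n) := by
  exact (measurable_id.pow_const 2).mul ((measurable_id.add_const _).pow_const 2).inv

lemma Fn_integrable (n : ℕ) : IntegrableOn (Fn n) (Ioc (0:ℝ) 1) := by
  refine Integrable.mono' (integrable_const ((((n:ℝ) + 1) ^ 2)⁻¹))
    (Fn_meas n).aestronglyMeasurable ?_
  rw [ae_restrict_iff' measurableSet_Ioc]
  filter_upwards with x hx using Fn_bound hx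

lemma Fn_norm_integral_le (n : ℕ) :
    ∫ x in Ioc (0:ℝ) 1, ‖Fn n x‖ ≤ (((n:ℝ) + 1) ^ 2)⁻¹ := by
  have h := integral_mono_ae (μ := volume.restrict (Ioc (0:ℝ) 1))
    (Fn_integrable n).norm (integrable_const ((((n:ℝ) + 1) ^ 2)⁻¹)) ?_
  · simpa using h
  · rw [EventuallyLE, ae_restrict_iff' measurableSet_Ioc]
    filter_upwards with x hx using Fn_bound hx

lemma summable_base : Summable (fun n : ℕ => (((n:ℝ) + 1) ^ 2)⁻¹) := by
  have : Summable (fun m : ℕ => ((m : ℝ) ^ 2)⁻¹) := by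
    simpa [one_div] using Real.summable_one_div_nat_pow.mpr (by norm_num : 2 ≤ 2)
  have := (summable_nat_add_iff 1).mpr this
  exact this.congr fun m => by push_cast; ring_nf

noncomputable def A : ℕ → ℝ
  | 0 => 1
  | (n+1) => 2 - ((n:ℝ) + 2)⁻¹ - 2 * ((n:ℝ) + 1) * (Real.log ((n:ℝ) + 2) - Real.log ((n:ℝ) + 1))

lemma integral_Fn_zero : ∫ x in Ioc (0:ℝ) 1, Fn 0 x = 1 := by
  rw [setIntegral_congr_fun measurableSet_Ioc (g := fun _ => (1:ℝ))]
  · simp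
  · intro x hx
    have hx0 : (0:ℝ) < x := hx.1
    simp only [Fn, Nat.cast_zero, add_zero]
    rw [mul_inv_cancel₀ (by positivity)]

lemma integral_Fn_succ (k : ℕ) : ∫ x in Ioc (0:ℝ) 1, Fn (k+1) x = A (k+1) := by
  set c : ℝ := (k:ℝ) + 1 with hc
  have hc0 : (0:ℝ) < c := by positivity
  have key : ∫ x in (0:ℝ)..1, Fn (k+1) x = A (k+1) := by
    have hd : ∀ x ∈ Set.uIcc (0:ℝ) 1, HasDerivAt
        (fun x : ℝ => x - 2 * c * Real.log (x + c) - c ^ 2 * (x + c)⁻¹)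
        (Fn (k+1) x) x := by
      intro x hx
      rw [Set.uIcc_of_le (by norm_num : (0:ℝ) ≤ 1)] at hx
      have hxc : (0:ℝ) < x + c := by have := hx.1; positivity
      have h1 : HasDerivAt (fun x : ℝ => Real.log (x + c)) (x + c)⁻¹ x := by
        simpa [one_div] using ((hasDerivAt_id x).add_const c).log hxc.ne'
      have h2 : HasDerivAt (fun x : ℝ => (x + c)⁻¹) (-((x + c) ^ 2)⁻¹) x := by
        simpa [neg_div, one_div] using ((hasDerivAt_id x).add_const c).fun_inv hxc.ne'
      have := ((hasDerivAt_id x).fun_sub ((h1.const_mul (2 * c)))).fun_sub (h2.const_mul (c ^ 2))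
      refine this.congr_deriv ?_
      symm
      rw [Fn]
      push_cast [hc]
      have hxc' : x + ((k:ℝ) + 1) ≠ 0 := by positivity
      field_simp
      ring
    have hcont : IntervalIntegrable (Fn (k+1)) volume 0 1 := by
      apply ContinuousOn.intervalIntegrable
      apply ContinuousOn.mul (continuousOn_pow 2)
      apply ContinuousOn.inv₀ (by fun_prop)
      intro x hx
      rw [Set.uIcc_of_le (by norm_num : (0:ℝ) ≤ 1)] at hx
      have := hx.1
      positivity
    rw [intervalIntegral.integral_eq_sub_of_hasDerivAt hd hcont]
    rw [A]
    push_cast [hc]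
    have l1 : (0:ℝ) + ((k:ℝ)+1) = (k:ℝ)+1 := by ring
    have l2 : (1:ℝ) + ((k:ℝ)+1) = (k:ℝ)+2 := by ring
    rw [l1, l2]
    field_simp
    ring
  rw [← intervalIntegral.integral_of_le (by norm_num : (0:ℝ) ≤ 1), key]

lemma integral_Fn (n : ℕ) : ∫ x in Ioc (0:ℝ) 1, Fn n x = A n := by
  cases n with
  | zero => rw [integral_Fn_zero]; rfl
  | succ k => exact integral_Fn_succ k

lemma sumA (M : ℕ) : ∑ n ∈ Finset.range (M+1), A n =
    2 + 2*M - (harmonic (M+1) : ℝ) - 2*M*Real.log (M+1) + 2*Real.log (Nat.factorial M : ℕ) := by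
  induction M with
  | zero =>
    simp [A, harmonic_succ]
    norm_num
  | succ M ih =>
    rw [Finset.sum_range_succ, ih]
    have hh : (harmonic (M+1+1) : ℝ) = (harmonic (M+1) : ℝ) + ((M:ℝ)+2)⁻¹ := by
      rw [harmonic_succ]; push_cast; ring
    have hfac : Real.log ((Nat.factorial (M+1) : ℕ) : ℝ)
        = Real.log ((Nat.factorial M : ℕ) : ℝ) + Real.log ((M:ℝ)+1) := by
      rw [Nat.factorial_succ]
      push_cast
      rw [Real.log_mul (by positivity) (by positivity : ((Nat.factorial M : ℕ) : ℝ) ≠ 0)]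
      ring
    have hA : A (M+1) = 2 - ((M:ℝ) + 2)⁻¹
        - 2 * ((M:ℝ) + 1) * (Real.log ((M:ℝ) + 2) - Real.log ((M:ℝ) + 1)) := rfl
    push_cast [hh, hfac, hA]
    rw [show (M:ℝ)+1+1 = (M:ℝ)+2 by ring]
    ring

lemma log_half_aux : 2 * Real.log (Real.sqrt Real.pi) = Real.log Real.pi := by
  rw [Real.log_sqrt Real.pi_pos.le]; ring

lemma tendsto_partial :
    Tendsto (fun M : ℕ => 2 + 2*(M:ℝ) - (harmonic (M+1) : ℝ)
      - 2*(M:ℝ)*Real.log ((M:ℝ)+1) + 2*Real.log (Nat.factorial M : ℕ)) atTop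
      (𝓝 (Real.log (2 * Real.pi) - Real.eulerMascheroniConstant)) := by
  have c1 : Tendsto (fun M : ℕ => Real.log ((M:ℝ)+1) - (harmonic (M+1) : ℝ)) atTop
      (𝓝 (-Real.eulerMascheroniConstant)) := by
    have h := (Real.tendsto_harmonic_sub_log.neg).comp (tendsto_add_atTop_nat 1)
    refine h.congr fun M => ?_
    simp only [Function.comp_apply]
    push_cast
    ring
  have c2 : Tendsto (fun M : ℕ => Real.log (1 + 1/(M:ℝ))) atTop (𝓝 0) := by
    have h : Tendsto (fun M : ℕ => 1 + 1/(M:ℝ)) atTop (𝓝 1) := by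
      simpa using (tendsto_const_nhds (x := (1:ℝ))).add tendsto_one_div_atTop_nhds_zero_nat
    simpa using h.log one_ne_zero
  have c3 : Tendsto (fun M : ℕ => (M:ℝ) * Real.log (1 + 1/(M:ℝ))) atTop (𝓝 1) := by
    have h := (Real.tendsto_one_add_div_pow_exp 1).log (Real.exp_ne_zero 1)
    rw [Real.log_exp] at h
    refine h.congr fun M => ?_
    rw [Real.log_pow]
  have c4 : Tendsto (fun M : ℕ => Real.log (Stirling.stirlingSeq M)) atTop
      (𝓝 (Real.log (Real.sqrt Real.pi))) := by
    exact Stirling.tendsto_stirlingSeq_sqrt_pi.log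
      (ne_of_gt (Real.sqrt_pos.mpr Real.pi_pos))
  have comb : Tendsto (fun M : ℕ => (2 + Real.log 2)
      + ((Real.log ((M:ℝ)+1) - (harmonic (M+1) : ℝ))
      + (-Real.log (1 + 1/(M:ℝ))
      + (-(2*((M:ℝ) * Real.log (1 + 1/(M:ℝ))))
      + 2*Real.log (Stirling.stirlingSeq M))))) atTop
      (𝓝 ((2 + Real.log 2) + (-Real.eulerMascheroniConstant
        + (-(0:ℝ) + (-(2*1) + 2*Real.log (Real.sqrt Real.pi)))))) := by
    exact tendsto_const_nhds.add (c1.add ((c2.neg).add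
      (((c3.const_mul 2).neg).add (c4.const_mul 2))))
  have heq : (2 + Real.log 2) + (-Real.eulerMascheroniConstant
        + (-(0:ℝ) + (-(2*1) + 2*Real.log (Real.sqrt Real.pi))))
      = Real.log (2 * Real.pi) - Real.eulerMascheroniConstant := by
    rw [log_half_aux, Real.log_mul two_ne_zero Real.pi_ne_zero]
    ring
  rw [heq] at comb
  refine comb.congr' ?_
  filter_upwards [eventually_ge_atTop 1] with M hM
  have hM0 : (0:ℝ) < M := by exact_mod_cast hM
  have hfac0 : (0:ℝ) < ((Nat.factorial M : ℕ) : ℝ) := by exact_mod_cast (Nat.factorial_pos M)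
  have hst := Stirling.log_stirlingSeq_formula M
  -- log M! = log sM + 1/2 log (2M) + M log (M / e)
  have hlogfac : Real.log ((Nat.factorial M : ℕ) : ℝ) = Real.log (Stirling.stirlingSeq M)
      + 1/2 * Real.log (2*(M:ℝ)) + (M:ℝ) * Real.log ((M:ℝ) / Real.exp 1) := by
    rw [hst]; ring
  have hlog2M : Real.log (2*(M:ℝ)) = Real.log 2 + Real.log (M:ℝ) :=
    Real.log_mul two_ne_zero hM0.ne'
  have hlogMe : Real.log ((M:ℝ) / Real.exp 1) = Real.log (M:ℝ) - 1 := by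
    rw [Real.log_div hM0.ne' (Real.exp_ne_zero 1), Real.log_exp]
  have hlog1p : Real.log (1 + 1/(M:ℝ)) = Real.log ((M:ℝ)+1) - Real.log (M:ℝ) := by
    rw [show (1:ℝ) + 1/(M:ℝ) = ((M:ℝ)+1)/(M:ℝ) by field_simp]
    rw [Real.log_div (by positivity) hM0.ne']
  rw [hlogfac, hlog2M, hlogMe, hlog1p]
  ring

lemma summable_normint : Summable (fun n : ℕ => ∫ x in Ioc (0:ℝ) 1, ‖Fn n x‖) :=
  Summable.of_nonneg_of_le (fun n => integral_nonneg fun x => norm_nonneg _)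
    Fn_norm_integral_le summable_base

lemma swap_sum_int :
    ∑' n : ℕ, ∫ x in Ioc (0:ℝ) 1, Fn n x = ∫ x in Ioc (0:ℝ) 1, ∑' n, Fn n x :=
  MeasureTheory.integral_tsum_of_summable_integral_norm Fn_integrable summable_normint

lemma summable_A : Summable A := by
  refine Summable.of_nonneg_of_le (fun n => ?_) (fun n => ?_) summable_normint
  · rw [← integral_Fn n]
    apply MeasureTheory.integral_nonneg
    intro x
    simp only [Fn, Pi.zero_apply]
    positivity
  · rw [← integral_Fn n]
    apply integral_mono_ae (Fn_integrable n) (Fn_integrable n).norm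
    filter_upwards with x using le_abs_self _

lemma tsum_A : ∑' n, A n = Real.log (2 * Real.pi) - Real.eulerMascheroniConstant := by
  have h2 : Tendsto (fun M => ∑ n ∈ Finset.range (M+1), A n) atTop (𝓝 (∑' n, A n)) :=
    summable_A.hasSum.tendsto_sum_nat.comp (tendsto_add_atTop_nat 1)
  have h2' := h2.congr (fun M => sumA M)
  exact tendsto_nhds_unique h2' tendsto_partial


end IntegralSqTrigammaAux

open Real Filter Topology Set MeasureTheory intervalIntegral IntegralSqTrigammaAux in
theorem integral_sq_trigamma :
    ∫ x in (0 : ℝ)..1, x ^ 2 * deriv digamma x =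
      Real.log (2 * Real.pi) - Real.eulerMascheroniConstant := by
  rw [intervalIntegral.integral_of_le (by norm_num : (0:ℝ) ≤ 1)]
  have hcongr : ∀ x ∈ Ioc (0:ℝ) 1, x ^ 2 * deriv digamma x = ∑' n : ℕ, Fn n x := by
    intro x hx
    rw [deriv_digamma_eq hx.1, psi2, ← tsum_mul_left]
    rfl
  rw [setIntegral_congr_fun measurableSet_Ioc hcongr, ← swap_sum_int,
    tsum_congr (fun n => integral_Fn n), tsum_A]
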